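/- Let z_1,…,z_r ∈ ℤ^d be generating vectors and n_1,…,n_r ≥ 1 integer moduli, with n = n_1⋯n_r, and let A ⊂ ℤ^d be an anti-aliasing set with |A| = n. Then for all multi-indices k, k' ∈ ℤ_{n_1}×⋯×ℤ_{n_r}: (1/n) · Σ_{h ∈ A} exp(2πi · h·(p_k − p_{k'})) equals 1 if k = k' and equals 0 otherwise, where p_k = Σ_{j=1}^{r} (k_j/n_j) z_j. -/

import Mathlib

noncomputable section

/-- Integer dot product on `ℤ^d`. -/
def dotZ {d : ℕ} (h z : Fin d → ℤ) : ℤ := ∑ i, h i * z i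

/-- Membership in the dual lattice `Λ^⊥`. -/
def InDual {d r : ℕ} (z : Fin r → Fin d → ℤ) (n : Fin r → ℕ) (h : Fin d → ℤ) : Prop :=
  ∀ j, (n j : ℤ) ∣ dotZ h (z j)

/-- The lattice point `p_k = Σ_j (k_j/n_j) z_j ∈ ℝ^d`. -/
def latPt {d r : ℕ} (z : Fin r → Fin d → ℤ) (n : Fin r → ℕ)
    (k : (j : Fin r) → Fin (n j)) : Fin d → ℝ :=
  fun i => ∑ j, ((k j : ℝ) / (n j : ℝ)) * (z j i : ℝ)

/-- The exponential `x ↦ exp(2πi h·x)`. -/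
def eFun {d : ℕ} (h : Fin d → ℤ) (x : Fin d → ℝ) : ℂ :=
  Complex.exp (2 * Real.pi * Complex.I * ∑ i, (h i : ℂ) * (x i : ℂ))

open Complex Finset in
/-- Replace an integer by its residue mod `N` inside the exponential. -/
lemma exp_residue (c D : ℤ) (N : ℕ) [NeZero N] :
    Complex.exp (2 * Real.pi * Complex.I * c * D / N)
      = Complex.exp (2 * Real.pi * Complex.I * c * (((D : ZMod N).val : ℕ) : ℂ) / N) := by
  have hdvd : (N : ℤ) ∣ (D - ((D : ZMod N).val : ℤ)) := by
    rw [← ZMod.intCast_zmod_eq_zero_iff_dvd]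
    push_cast
    rw [show ((((D : ZMod N).val : ℕ)) : ZMod N) = ((D : ℤ) : ZMod N) from
      ZMod.natCast_rightInverse _, sub_self]
  obtain ⟨t, ht⟩ := hdvd
  have hN : (N : ℂ) ≠ 0 := Nat.cast_ne_zero.mpr (NeZero.ne N)
  have hD : (D : ℂ) = (((D : ZMod N).val : ℕ) : ℂ) + N * t := by
    have h2 : (D : ℤ) = ((D : ZMod N).val : ℤ) + N * t := by linarith
    exact_mod_cast congrArg (fun x : ℤ => (x : ℂ)) h2
  rw [hD]
  have hsplit : 2 * (Real.pi : ℂ) * Complex.I * c * ((((D : ZMod N).val : ℕ) : ℂ) + N * t) / N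
      = 2 * Real.pi * Complex.I * c * (((D : ZMod N).val : ℕ) : ℂ) / N
        + ((c * t : ℤ) : ℂ) * (2 * Real.pi * Complex.I) := by
    push_cast
    field_simp
  rw [hsplit, Complex.exp_add, Complex.exp_int_mul_two_pi_mul_I, mul_one]

open Complex Finset in
/-- The geometric-sum vanishing: if `N ∤ c` then `∑_{m : ZMod N} e(c m / N) = 0`. -/
lemma sum_exp_eq_zero (N : ℕ) [NeZero N] (c : ℤ) (hc : ¬ (N : ℤ) ∣ c) :
    ∑ x : ZMod N, Complex.exp (2 * Real.pi * Complex.I * c * ((x.val : ℕ) : ℂ) / N) = 0 := by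
  have hN : (N : ℂ) ≠ 0 := Nat.cast_ne_zero.mpr (NeZero.ne N)
  set ζ : ℂ := Complex.exp (2 * Real.pi * Complex.I * c / N) with hζ
  have hterm : ∀ x : ZMod N,
      Complex.exp (2 * Real.pi * Complex.I * c * ((x.val : ℕ) : ℂ) / N) = ζ ^ x.val := by
    intro x
    rw [hζ, ← Complex.exp_nat_mul]
    congr 1
    ring
  rw [Finset.sum_congr rfl fun x _ => hterm x]
  have hbij : ∑ x : ZMod N, ζ ^ x.val = ∑ i ∈ Finset.range N, ζ ^ i := by
    apply Finset.sum_bij (fun (x : ZMod N) _ => x.val)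
    · intro x _; exact Finset.mem_range.mpr x.val_lt
    · intro a _ b _ hab; exact ZMod.val_injective N hab
    · intro i hi
      exact ⟨(i : ZMod N), Finset.mem_univ _,
        ZMod.val_natCast_of_lt (Finset.mem_range.mp hi)⟩
    · intro x _; rfl
  rw [hbij]
  have h2pI : (2 * (Real.pi : ℂ) * Complex.I) ≠ 0 :=
    mul_ne_zero (mul_ne_zero two_ne_zero (by exact_mod_cast Real.pi_ne_zero)) Complex.I_ne_zero
  have hζ1 : ζ ≠ 1 := by
    rw [hζ]
    intro h1
    rw [Complex.exp_eq_one_iff] at h1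
    obtain ⟨t, ht⟩ := h1
    have h3 : (2 * (Real.pi : ℂ) * Complex.I) * ((c : ℂ) / N)
        = (2 * Real.pi * Complex.I) * t := by
      rw [show 2 * (Real.pi : ℂ) * Complex.I * ((c : ℂ) / N)
          = 2 * Real.pi * Complex.I * (c : ℂ) / N by ring, ht]
      ring
    have h4 : (c : ℂ) / N = t := mul_left_cancel₀ h2pI h3
    have h5 : (c : ℂ) = t * N := (div_eq_iff hN).mp h4
    have h6 : c = t * N := by exact_mod_cast h5
    exact hc ⟨t, by rw [h6]; ring⟩
  have hζN : ζ ^ N = 1 := by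
    rw [hζ, ← Complex.exp_nat_mul]
    have : (N : ℂ) * (2 * Real.pi * Complex.I * c / N) = (c : ℂ) * (2 * Real.pi * Complex.I) := by
      field_simp
    rw [this, Complex.exp_int_mul_two_pi_mul_I]
  rw [geom_sum_eq hζ1, hζN, sub_self, zero_div]

/-- **Dual character property.** For an anti-aliasing set `A` of full cardinality
`n = n 1 ⋯ n r`, for all multi-indices `k, k'`:
`(1/n) Σ_{h ∈ A} exp(2πi h·(p_k − p_{k'}))` is `1` if `k = k'` and `0` otherwise. -/
theorem dual_character_property
    (d r : ℕ) (hr : 1 ≤ r)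
    (z : Fin r → Fin d → ℤ) (n : Fin r → ℕ) (hn : ∀ j, 1 ≤ n j)
    (A : Finset (Fin d → ℤ))
    (hA : ∀ h ∈ A, ∀ h' ∈ A, h ≠ h' → ¬ InDual z n (h - h'))
    (hcard : A.card = ∏ j, n j)
    (k k' : (j : Fin r) → Fin (n j)) :
    (1 / (∏ j, (n j : ℂ))) * ∑ h ∈ A, eFun h (latPt z n k - latPt z n k')
    = if k = k' then 1 else 0 := by
  haveI : ∀ j, NeZero (n j) := fun j => ⟨by have := hn j; omega⟩
  have hprodne : (∏ j, (n j : ℂ)) ≠ 0 :=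
    Finset.prod_ne_zero_iff.mpr fun j _ => Nat.cast_ne_zero.mpr (by have := hn j; omega)
  by_cases hkk : k = k'
  · subst hkk
    rw [if_pos rfl]
    have h1 : ∀ h ∈ A, eFun h (latPt z n k - latPt z n k) = 1 := by
      intro h _
      rw [sub_self]
      simp [eFun]
    rw [Finset.sum_congr rfl h1, Finset.sum_const, hcard, nsmul_eq_mul, mul_one]
    push_cast
    exact one_div_mul_cancel hprodne
  · rw [if_neg hkk]
    set δ : Fin r → ℤ := fun j => (k j : ℤ) - (k' j : ℤ) with hδ
    set φ : (Fin d → ℤ) → ∀ j, ZMod (n j) := fun h j => ((dotZ h (z j) : ℤ) : ZMod (n j)) with hφ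
    set F : (∀ j, ZMod (n j)) → ℂ := fun m =>
      ∏ j, Complex.exp (2 * Real.pi * Complex.I * (δ j : ℂ) * (((m j).val : ℕ) : ℂ) / (n j))
      with hF
    -- every term factors through φ
    have hEF : ∀ h : Fin d → ℤ, eFun h (latPt z n k - latPt z n k') = F (φ h) := by
      intro h
      have e1 : ∑ i, (h i : ℂ) * (((latPt z n k - latPt z n k') i : ℝ) : ℂ)
          = ∑ j, (δ j : ℂ) * (dotZ h (z j) : ℂ) / (n j) := by
        have e2 : ∀ i, (h i : ℂ) * (((latPt z n k - latPt z n k') i : ℝ) : ℂ)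
            = ∑ j, (δ j : ℂ) * ((h i : ℂ) * (z j i : ℂ)) / (n j) := by
          intro i
          simp only [Pi.sub_apply, latPt]
          push_cast
          rw [← Finset.sum_sub_distrib, Finset.mul_sum]
          refine Finset.sum_congr rfl fun j _ => by simp only [hδ]; push_cast; ring
        rw [Finset.sum_congr rfl fun i _ => e2 i, Finset.sum_comm]
        refine Finset.sum_congr rfl fun j _ => ?_
        simp only [dotZ]
        push_cast
        rw [Finset.mul_sum, Finset.sum_div]
        try refine Finset.sum_congr rfl fun i _ => by ring
      rw [eFun, e1, Finset.mul_sum, Complex.exp_sum, hF, hφ]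
      refine Finset.prod_congr rfl fun j _ => ?_
      rw [show 2 * (Real.pi : ℂ) * Complex.I * ((δ j : ℂ) * (dotZ h (z j) : ℂ) / (n j))
          = 2 * Real.pi * Complex.I * (δ j : ℂ) * (dotZ h (z j) : ℂ) / (n j) by ring]
      exact exp_residue (δ j) (dotZ h (z j)) (n j)
    -- φ is injective on A
    have hinj : Set.InjOn φ A := by
      intro a ha b hb hab
      by_contra hne
      refine hA a ha b hb hne fun j => ?_
      have h1 : ((dotZ a (z j) : ℤ) : ZMod (n j)) = ((dotZ b (z j) : ℤ) : ZMod (n j)) :=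
        congrFun hab j
      have hd : dotZ (a - b) (z j) = dotZ a (z j) - dotZ b (z j) := by
        simp only [dotZ, Pi.sub_apply, sub_mul]
        exact Finset.sum_sub_distrib _ _
      rw [← ZMod.intCast_zmod_eq_zero_iff_dvd, hd]
      push_cast
      rw [h1, sub_self]
    -- the image of A is everything
    have himg : A.image φ = Finset.univ := by
      apply Finset.eq_univ_of_card
      rw [Finset.card_image_of_injOn hinj, hcard]
      simp [Fintype.card_pi, ZMod.card]
    obtain ⟨j0, hj0⟩ : ∃ j, k j ≠ k' j := by
      by_contra hc; push_neg at hc; exact hkk (funext hc)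
    have hsum : ∑ h ∈ A, eFun h (latPt z n k - latPt z n k') = 0 := by
      rw [Finset.sum_congr rfl fun h _ => hEF h,
        ← Finset.sum_image fun a ha b hb => hinj ha hb, himg, hF]
      rw [← Fintype.prod_sum
        (f := fun j (x : ZMod (n j)) =>
          Complex.exp (2 * Real.pi * Complex.I * (δ j : ℂ) * ((x.val : ℕ) : ℂ) / (n j)))]
      apply Finset.prod_eq_zero (Finset.mem_univ j0)
      apply sum_exp_eq_zero
      intro hdvd
      have habs : (k j0 : ℤ) - (k' j0 : ℤ) = 0 := by
        refine Int.eq_zero_of_abs_lt_dvd hdvd ?_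
        have h1 := (k j0).isLt
        have h2 := (k' j0).isLt
        rw [abs_lt]
        constructor <;> [skip; skip] <;> push_cast <;> omega
      exact hj0 (Fin.ext (by omega))
    rw [hsum, mul_zero]

end
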